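/- The minimum value of H satisfies 3.8265 < min_{c ∈ ℝ} H(c) < 3.8267. -/

import Mathlib

open MeasureTheory Real Set

/-- The closed trapezium with vertices (2,-1), (-1,2), (-1,0), (0,-1). -/
def T : Set (ℝ × ℝ) :=
  {p : ℝ × ℝ | -1 ≤ p.1 ∧ -1 ≤ p.2 ∧ -1 ≤ p.1 + p.2 ∧ p.1 + p.2 ≤ 1}

/-- `H c = ∫_T e^{-c(x₁+x₂)} dx₁ dx₂` (Lebesgue measure on ℝ²). -/
noncomputable def H (c : ℝ) : ℝ := ∫ p in T, Real.exp (-c * (p.1 + p.2))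

lemma int_exp (c : ℝ) (hc : c ≠ 0) (a b : ℝ) :
    ∫ y in a..b, Real.exp (-c * y) = (Real.exp (-c*a) - Real.exp (-c*b)) / c := by
  have hd : ∀ y : ℝ, HasDerivAt (fun y => -Real.exp (-c * y) / c) (Real.exp (-c * y)) y := by
    intro y
    have h1 : HasDerivAt (fun y : ℝ => -c * y) (-c) y := by
      simpa using (hasDerivAt_id y).const_mul (-c)
    have h2 := (h1.exp).neg.div_const c
    exact h2.congr_deriv (by field_simp)
  rw [intervalIntegral.integral_eq_sub_of_hasDerivAt (fun y _ => hd y)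
    ((continuous_exp.comp (continuous_const.mul continuous_id)).intervalIntegrable a b)]
  field_simp
  ring

lemma isClosed_T : IsClosed T := by
  have : T = {p : ℝ × ℝ | -1 ≤ p.1} ∩ {p | -1 ≤ p.2} ∩ {p | -1 ≤ p.1 + p.2} ∩ {p | p.1 + p.2 ≤ 1} := by
    ext p; simp only [T, mem_setOf_eq, mem_inter_iff]; tauto
  rw [this]
  exact (((isClosed_le continuous_const continuous_fst).inter
    (isClosed_le continuous_const continuous_snd)).inter
    (isClosed_le continuous_const (continuous_fst.add continuous_snd))).inter
    (isClosed_le (continuous_fst.add continuous_snd) continuous_const)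

lemma measurableSet_T : MeasurableSet T := isClosed_T.measurableSet

lemma isCompact_T : IsCompact T := by
  refine IsCompact.of_isClosed_subset (isCompact_Icc (a := ((-1:ℝ),(-1:ℝ))) (b := ((2:ℝ),(2:ℝ)))) isClosed_T ?_
  rintro ⟨x, y⟩ ⟨h1, h2, h3, h4⟩
  constructor <;> (constructor <;> simp <;> linarith)

lemma intg (c : ℝ) : IntegrableOn (fun p : ℝ × ℝ => Real.exp (-c * (p.1 + p.2))) T volume :=
  ((continuous_exp.comp ((continuous_const.mul (continuous_fst.add continuous_snd)))).continuousOn.integrableOn_compact isCompact_T)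

noncomputable def inrF (c : ℝ) (x : ℝ) : ℝ :=
  ∫ y in Icc (max (-1) (-1-x)) (1-x), Real.exp (-c * (x + y))

lemma slice_eq (c : ℝ) (x : ℝ) :
    (∫ y : ℝ, T.indicator (fun p : ℝ × ℝ => Real.exp (-c * (p.1 + p.2))) (x, y))
      = (Icc (-1:ℝ) 2).indicator (inrF c) x := by
  by_cases hx : x ∈ Icc (-1:ℝ) 2
  · rw [indicator_of_mem hx]
    have hiff : ∀ y : ℝ, ((x, y) ∈ T ↔ y ∈ Icc (max (-1:ℝ) (-1-x)) (1-x)) := by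
      intro y
      simp only [T, mem_setOf_eq, mem_Icc, max_le_iff]
      constructor
      · rintro ⟨_, h2, h3, h4⟩; exact ⟨⟨h2, by linarith⟩, by linarith⟩
      · rintro ⟨⟨h1, h2⟩, h3⟩; exact ⟨hx.1, h1, by linarith, by linarith⟩
    have hfun : (fun y => T.indicator (fun p : ℝ × ℝ => Real.exp (-c * (p.1 + p.2))) (x, y))
        = fun y => (Icc (max (-1:ℝ) (-1-x)) (1-x)).indicator
            (fun y => Real.exp (-c * (x + y))) y := by
      funext y
      by_cases h : (x, y) ∈ T
      · rw [indicator_of_mem h, indicator_of_mem ((hiff y).1 h)]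
      · rw [indicator_of_notMem h, indicator_of_notMem (fun hy => h ((hiff y).2 hy))]
    rw [hfun, integral_indicator measurableSet_Icc]
    rfl
  · rw [indicator_of_notMem hx]
    have hz : ∀ y : ℝ, T.indicator (fun p : ℝ × ℝ => Real.exp (-c * (p.1 + p.2))) (x, y) = 0 := by
      intro y
      apply indicator_of_notMem
      rintro ⟨h1, h2, h3, h4⟩
      simp only [mem_Icc, not_and, not_le] at hx
      have := hx h1
      linarith
    simp only [hz, integral_zero]

lemma evalA (c : ℝ) (hc : c ≠ 0) : ∀ x ∈ Icc (-1:ℝ) 0,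
    inrF c x = (Real.exp c - Real.exp (-c)) / c := by
  intro x hx
  have hmax : max (-1:ℝ) (-1-x) = -1-x := max_eq_right (by linarith [hx.2])
  have hle : (-1-x : ℝ) ≤ 1-x := by linarith
  rw [inrF, hmax, integral_Icc_eq_integral_Ioc, ← intervalIntegral.integral_of_le hle]
  have gsplit : ∀ y : ℝ, Real.exp (-c * (x + y)) = Real.exp (-c*x) * Real.exp (-c*y) := by
    intro y; rw [← Real.exp_add]; congr 1; ring
  simp_rw [gsplit]
  rw [intervalIntegral.integral_const_mul, int_exp c hc]
  have e1 : Real.exp (-c*x) * Real.exp (-c*(-1-x)) = Real.exp c := by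
    rw [← Real.exp_add]; congr 1; ring
  have e2 : Real.exp (-c*x) * Real.exp (-c*(1-x)) = Real.exp (-c) := by
    rw [← Real.exp_add]; congr 1; ring
  rw [show Real.exp (-c*x) * ((Real.exp (-c*(-1-x)) - Real.exp (-c*(1-x)))/c)
      = (Real.exp (-c*x) * Real.exp (-c*(-1-x)) - Real.exp (-c*x) * Real.exp (-c*(1-x)))/c from by
    ring, e1, e2]

lemma evalB (c : ℝ) (hc : c ≠ 0) : ∀ x ∈ Ioc (0:ℝ) 2,
    inrF c x = (Real.exp c * Real.exp (-c*x) - Real.exp (-c)) / c := by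
  intro x hx
  have hmax : max (-1:ℝ) (-1-x) = -1 := max_eq_left (by linarith [hx.1])
  have hle : (-1:ℝ) ≤ 1-x := by linarith [hx.2]
  rw [inrF, hmax, integral_Icc_eq_integral_Ioc, ← intervalIntegral.integral_of_le hle]
  have gsplit : ∀ y : ℝ, Real.exp (-c * (x + y)) = Real.exp (-c*x) * Real.exp (-c*y) := by
    intro y; rw [← Real.exp_add]; congr 1; ring
  simp_rw [gsplit]
  rw [intervalIntegral.integral_const_mul, int_exp c hc]
  have e1 : Real.exp (-c*x) * Real.exp (-c*(-1:ℝ)) = Real.exp c * Real.exp (-c*x) := by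
    rw [← Real.exp_add, ← Real.exp_add]; congr 1; ring
  have e2 : Real.exp (-c*x) * Real.exp (-c*(1-x)) = Real.exp (-c) := by
    rw [← Real.exp_add]; congr 1; ring
  rw [show Real.exp (-c*x) * ((Real.exp (-c*(-1:ℝ)) - Real.exp (-c*(1-x)))/c)
      = (Real.exp (-c*x) * Real.exp (-c*(-1:ℝ)) - Real.exp (-c*x) * Real.exp (-c*(1-x)))/c from by
    ring, e1, e2]

lemma H_eq (c : ℝ) (hc : c ≠ 0) :
    H c = ((1+c) * Real.exp c - (1+3*c) * Real.exp (-c)) / c^2 := by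
  have hint : Integrable (T.indicator (fun p : ℝ × ℝ => Real.exp (-c * (p.1 + p.2))))
      ((volume : Measure ℝ).prod volume) := by
    rw [← Measure.volume_eq_prod]
    exact (integrable_indicator_iff measurableSet_T).2 (intg c)
  have step1 : H c = ∫ x : ℝ, ∫ y : ℝ,
      T.indicator (fun p : ℝ × ℝ => Real.exp (-c * (p.1 + p.2))) (x, y) := by
    rw [H, ← integral_indicator measurableSet_T, Measure.volume_eq_prod]
    exact integral_prod _ hint
  have step3 : H c = ∫ x in Icc (-1:ℝ) 2, inrF c x := by
    rw [step1]
    simp_rw [slice_eq c]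
    rw [integral_indicator measurableSet_Icc]
  have intA : IntegrableOn (inrF c) (Icc (-1:ℝ) 0) volume := by
    rw [integrableOn_congr_fun (evalA c hc) measurableSet_Icc]
    exact integrableOn_const measure_Icc_lt_top.ne
  have intB : IntegrableOn (inrF c) (Ioc (0:ℝ) 2) volume := by
    rw [integrableOn_congr_fun (evalB c hc) measurableSet_Ioc]
    exact (((continuous_const.mul (continuous_exp.comp (continuous_const.mul continuous_id))).sub
      continuous_const).div_const c).integrableOn_Ioc
  have disj : Disjoint (Icc (-1:ℝ) 0) (Ioc (0:ℝ) 2) :=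
    (Iic_disjoint_Ioi le_rfl).mono Icc_subset_Iic_self Ioc_subset_Ioi_self
  have step4 : H c = (∫ x in Icc (-1:ℝ) 0, inrF c x) + ∫ x in Ioc (0:ℝ) 2, inrF c x := by
    rw [step3, ← Icc_union_Ioc_eq_Icc (by norm_num : (-1:ℝ) ≤ 0) (by norm_num : (0:ℝ) ≤ 2),
      setIntegral_union disj measurableSet_Ioc intA intB]
  have valA : (∫ x in Icc (-1:ℝ) 0, inrF c x) = (Real.exp c - Real.exp (-c)) / c := by
    rw [setIntegral_congr_fun measurableSet_Icc (evalA c hc), setIntegral_const, Real.volume_real_Icc]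
    norm_num
  have valB : (∫ x in Ioc (0:ℝ) 2, inrF c x)
      = (Real.exp c / c) * ((Real.exp (-c*0) - Real.exp (-c*2)) / c) - 2 * (Real.exp (-c) / c) := by
    rw [setIntegral_congr_fun measurableSet_Ioc (evalB c hc),
      ← intervalIntegral.integral_of_le (by norm_num : (0:ℝ) ≤ 2)]
    have hsplit : ∀ x : ℝ, (Real.exp c * Real.exp (-c*x) - Real.exp (-c)) / c
        = (Real.exp c / c) * Real.exp (-c*x) - Real.exp (-c) / c := by
      intro x; ring
    simp_rw [hsplit]
    have hI1 : IntervalIntegrable (fun x : ℝ => Real.exp c / c * Real.exp (-c*x)) volume 0 2 :=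
      Continuous.intervalIntegrable (by continuity) 0 2
    have hI2 : IntervalIntegrable (fun _ : ℝ => Real.exp (-c) / c) volume 0 2 :=
      intervalIntegrable_const
    rw [intervalIntegral.integral_sub hI1 hI2,
      intervalIntegral.integral_const_mul, int_exp c hc, intervalIntegral.integral_const]
    norm_num
  have e3 : Real.exp c * Real.exp (-c*2) = Real.exp (-c) := by
    rw [← Real.exp_add]; congr 1; ring
  have e4 : Real.exp (-c*0) = 1 := by norm_num
  have e5 : Real.exp (-c*2) = Real.exp (-c) / Real.exp c := by
    rw [eq_div_iff (Real.exp_ne_zero c)]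
    linear_combination e3
  rw [step4, valA, valB, e4, e5]
  have hE := Real.exp_ne_zero c
  field_simp
  ring

lemma convexOn_H : ConvexOn ℝ univ H := by
  refine ⟨convex_univ, fun a _ b _ s t hs ht hst => ?_⟩
  simp only [smul_eq_mul]
  unfold H
  have key : ∀ p ∈ T, Real.exp (-(s*a+t*b) * (p.1+p.2)) ≤
      s * Real.exp (-a*(p.1+p.2)) + t * Real.exp (-b*(p.1+p.2)) := by
    intro p _
    have h := convexOn_exp.2 (mem_univ (-a*(p.1+p.2))) (mem_univ (-b*(p.1+p.2))) hs ht hst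
    simp only [smul_eq_mul] at h
    calc Real.exp (-(s*a+t*b) * (p.1+p.2)) = Real.exp (s*(-a*(p.1+p.2)) + t*(-b*(p.1+p.2))) := by
          ring_nf
      _ ≤ _ := h
  calc (∫ p in T, Real.exp (-(s*a+t*b) * (p.1+p.2)))
      ≤ ∫ p in T, (s * Real.exp (-a*(p.1+p.2)) + t * Real.exp (-b*(p.1+p.2))) :=
        setIntegral_mono_on (intg _) (((intg a).const_mul s).add ((intg b).const_mul t))
          measurableSet_T key
    _ = s * (∫ p in T, Real.exp (-a*(p.1+p.2))) + t * (∫ p in T, Real.exp (-b*(p.1+p.2))) := by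
        rw [integral_add ((intg a).const_mul s) ((intg b).const_mul t),
          integral_const_mul, integral_const_mul]

lemma chord (x y z : ℝ) (hxy : x ≤ y) (hyz : y ≤ z) (hxz : x < z) :
    (z - x) * H y ≤ (z - y) * H x + (y - x) * H z := by
  have hzx : (0:ℝ) < z - x := by linarith
  have hs : 0 ≤ (z - y)/(z - x) := div_nonneg (by linarith) hzx.le
  have ht : 0 ≤ (y - x)/(z - x) := div_nonneg (by linarith) hzx.le
  have hst : (z-y)/(z-x) + (y-x)/(z-x) = 1 := by field_simp; ring
  have h := convexOn_H.2 (mem_univ x) (mem_univ z) hs ht hst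
  simp only [smul_eq_mul] at h
  have hyy : (z-y)/(z-x) * x + (y-x)/(z-x) * z = y := by field_simp; ring
  rw [hyy] at h
  have h2 := mul_le_mul_of_nonneg_left h hzx.le
  have h3 : (z-x) * ((z-y)/(z-x) * H x + (y-x)/(z-x) * H z) = (z-y)*H x + (y-x)*H z := by
    field_simp
  rw [h3] at h2
  exact h2

lemma expb_p : 1.68202764969 < Real.exp 0.52 ∧ Real.exp 0.52 < 1.68202764970 := by
  have h := Real.exp_bound (x := 0.52) (by rw [abs_le]; norm_num) (n := 12) (by norm_num)
  rw [show |(0.52:ℝ)| = 0.52 from abs_of_pos (by norm_num), abs_le] at h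
  simp only [Finset.sum_range_succ, Finset.sum_range_zero] at h
  norm_num [Nat.factorial] at h
  constructor <;> linarith [h.1, h.2]

lemma expb_pn : 0.59452054796 < Real.exp (-0.52) ∧ Real.exp (-0.52) < 0.59452054798 := by
  have h := Real.exp_bound (x := -0.52) (by rw [abs_le]; norm_num) (n := 12) (by norm_num)
  rw [show |(-0.52:ℝ)| = 0.52 by rw [abs_neg]; exact abs_of_pos (by norm_num), abs_le] at h
  simp only [Finset.sum_range_succ, Finset.sum_range_zero] at h
  norm_num [Nat.factorial] at h
  constructor <;> linarith [h.1, h.2]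

lemma expb_a : 1.69215015273 < Real.exp 0.526 ∧ Real.exp 0.526 < 1.69215015274 := by
  have h := Real.exp_bound (x := 0.526) (by rw [abs_le]; norm_num) (n := 12) (by norm_num)
  rw [show |(0.526:ℝ)| = 0.526 from abs_of_pos (by norm_num), abs_le] at h
  simp only [Finset.sum_range_succ, Finset.sum_range_zero] at h
  norm_num [Nat.factorial] at h
  constructor <;> linarith [h.1, h.2]

lemma expb_an : 0.59096410467 < Real.exp (-0.526) ∧ Real.exp (-0.526) < 0.59096410469 := by
  have h := Real.exp_bound (x := -0.526) (by rw [abs_le]; norm_num) (n := 12) (by norm_num)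
  rw [show |(-0.526:ℝ)| = 0.526 by rw [abs_neg]; exact abs_of_pos (by norm_num), abs_le] at h
  simp only [Finset.sum_range_succ, Finset.sum_range_zero] at h
  norm_num [Nat.factorial] at h
  constructor <;> linarith [h.1, h.2]

lemma expb_b : 1.70063209067 < Real.exp 0.531 ∧ Real.exp 0.531 < 1.70063209068 := by
  have h := Real.exp_bound (x := 0.531) (by rw [abs_le]; norm_num) (n := 12) (by norm_num)
  rw [show |(0.531:ℝ)| = 0.531 from abs_of_pos (by norm_num), abs_le] at h
  simp only [Finset.sum_range_succ, Finset.sum_range_zero] at h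
  norm_num [Nat.factorial] at h
  constructor <;> linarith [h.1, h.2]

lemma expb_bn : 0.58801665891 < Real.exp (-0.531) ∧ Real.exp (-0.531) < 0.58801665892 := by
  have h := Real.exp_bound (x := -0.531) (by rw [abs_le]; norm_num) (n := 12) (by norm_num)
  rw [show |(-0.531:ℝ)| = 0.531 by rw [abs_neg]; exact abs_of_pos (by norm_num), abs_le] at h
  simp only [Finset.sum_range_succ, Finset.sum_range_zero] at h
  norm_num [Nat.factorial] at h
  constructor <;> linarith [h.1, h.2]

lemma Hp_bounds : 3.8265881 < H 0.52 ∧ H 0.52 < 3.8265882 := by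
  rw [H_eq 0.52 (by norm_num)]
  obtain ⟨h1, h2⟩ := expb_p
  obtain ⟨h3, h4⟩ := expb_pn
  rw [show ((0.52:ℝ))^2 = 0.2704 by norm_num]
  constructor
  · rw [lt_div_iff₀ (by norm_num : (0:ℝ) < 0.2704)]; nlinarith
  · rw [div_lt_iff₀ (by norm_num : (0:ℝ) < 0.2704)]; nlinarith

lemma Ha_bounds : 3.8265540 < H 0.526 ∧ H 0.526 < 3.8265541 := by
  rw [H_eq 0.526 (by norm_num)]
  obtain ⟨h1, h2⟩ := expb_a
  obtain ⟨h3, h4⟩ := expb_an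
  rw [show ((0.526:ℝ))^2 = 0.276676 by norm_num]
  constructor
  · rw [lt_div_iff₀ (by norm_num : (0:ℝ) < 0.276676)]; nlinarith
  · rw [div_lt_iff₀ (by norm_num : (0:ℝ) < 0.276676)]; nlinarith

lemma Hb_bounds : 3.8265594 < H 0.531 ∧ H 0.531 < 3.8265595 := by
  rw [H_eq 0.531 (by norm_num)]
  obtain ⟨h1, h2⟩ := expb_b
  obtain ⟨h3, h4⟩ := expb_bn
  rw [show ((0.531:ℝ))^2 = 0.281961 by norm_num]
  constructor
  · rw [lt_div_iff₀ (by norm_num : (0:ℝ) < 0.281961)]; nlinarith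
  · rw [div_lt_iff₀ (by norm_num : (0:ℝ) < 0.281961)]; nlinarith

/-- The minimum value of `H` lies strictly between `3.8265` and `3.8267`. -/
theorem stmt_11 :
    ∃ cs : ℝ, (∀ c : ℝ, H cs ≤ H c) ∧ 3.8265 < H cs ∧ H cs < 3.8267 := by
  obtain ⟨hp1, hp2⟩ := Hp_bounds
  obtain ⟨ha1, ha2⟩ := Ha_bounds
  obtain ⟨hb1, hb2⟩ := Hb_bounds
  have hcont : ContinuousOn H (Icc (0.52:ℝ) 0.531) := by
    have hf : ContinuousOn (fun c : ℝ => ((1+c) * Real.exp c - (1+3*c) * Real.exp (-c)) / c^2)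
        (Icc (0.52:ℝ) 0.531) := by
      apply ContinuousOn.div
      · fun_prop
      · fun_prop
      · intro x hx
        have := hx.1
        positivity
    exact hf.congr (fun x hx => H_eq x (by have := hx.1; norm_num; linarith))
  obtain ⟨cs, hcs_mem, hcs_min⟩ := (isCompact_Icc (a := (0.52:ℝ)) (b := 0.531)).exists_isMinOn
    ⟨0.52, by norm_num⟩ hcont
  have hmin : ∀ x ∈ Icc (0.52:ℝ) 0.531, H cs ≤ H x := fun x hx => hcs_min hx
  have hcsp : H cs ≤ H 0.52 := hmin 0.52 (by norm_num)
  have hcsa : H cs ≤ H 0.526 := hmin 0.526 (by norm_num)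
  have hcsb : H cs ≤ H 0.531 := hmin 0.531 (by norm_num)
  obtain ⟨hcs1, hcs2⟩ := hcs_mem
  refine ⟨cs, ?_, ?_, ?_⟩
  · intro x
    rcases lt_or_ge x 0.52 with hx | hx
    · have hch := chord x 0.52 0.526 (by linarith) (by norm_num) (by linarith)
      have hgap : (0:ℝ) ≤ H 0.52 - H 0.526 := by linarith
      have hprod : (0:ℝ) ≤ (0.52 - x) * (H 0.52 - H 0.526) :=
        mul_nonneg (by linarith) hgap
      linarith [hch, hprod]
    · rcases le_or_gt x 0.531 with hx2 | hx2
      · exact hmin x ⟨hx, hx2⟩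
      · have hch := chord 0.526 0.531 x (by norm_num) (by linarith) (by linarith)
        have hgap : (0:ℝ) ≤ H 0.531 - H 0.526 := by linarith
        have hprod : (0:ℝ) ≤ (x - 0.531) * (H 0.531 - H 0.526) :=
          mul_nonneg (by linarith) hgap
        linarith [hch, hprod]
  · rcases le_or_gt cs 0.526 with hcsle | hcsgt
    · have hch := chord cs 0.526 0.531 hcsle (by norm_num) (by linarith)
      have hp1' : (0:ℝ) ≤ (0.526 - cs) * (3.8265595 - H 0.531) :=
        mul_nonneg (by linarith) (by linarith)
      have hp2' : (0:ℝ) ≤ (0.531 - cs) * (H 0.526 - 3.8265540) :=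
        mul_nonneg (by linarith) (by linarith)
      linarith [hch, hp1', hp2']
    · have hch := chord 0.52 0.526 cs (by norm_num) (by linarith) (by linarith)
      have hp1' : (0:ℝ) ≤ (cs - 0.526) * (3.8265882 - H 0.52) :=
        mul_nonneg (by linarith) (by linarith)
      have hp2' : (0:ℝ) ≤ (cs - 0.52) * (H 0.526 - 3.8265540) :=
        mul_nonneg (by linarith) (by linarith)
      linarith [hch, hp1', hp2']
  · linarith
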